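/- Let R ⊆ ℝ^8 be the polytope of vectors (x₁, x₂, x₃, x₄, y₁, y₂, y₃, y₄) satisfying x₁ − (1 − y₁) ≤ x₄, (1 − x₃) − (1 − y₃) ≤ x₄, x₁ + (1 − x₃) + (1 − y₁) ≥ x₄, x₁ + (1 − x₃) + (1 − y₃) ≥ x₄, x₂ − (1 − y₂) ≤ x₃, x₄ − (1 − y₄) ≤ x₃, x₂ + x₄ + (1 − y₂) ≥ x₃, x₂ + x₄ + (1 − y₄) ≥ x₃, and 0 ≤ xᵢ, yᵢ ≤ 1 for i = 1,…,4. Then the fractional point (1/2, 1, 1/2, 1/2, 1, 1/2, 1, 1) is an extreme point of R, and the integral point (0, 0, 1, 0, 1, 0, 1, 0) is also an extreme point of R. In particular the linear relaxation of a monotonized dynamic system with two or more clauses is not integral in general. -/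

import Mathlib

private lemma seg_le {a b s t c : ℝ} (ha : 0 < a) (hb : 0 < b) (hab : a + b = 1)
    (h : a * s + b * t = c) (hs : s ≤ c) (ht : t ≤ c) : s = c ∧ t = c := by
  have hc : a * c + b * c = c := by rw [← add_mul, hab, one_mul]
  constructor
  · by_contra hne
    have h1 : a * s < a * c := mul_lt_mul_of_pos_left (lt_of_le_of_ne hs hne) ha
    have h2 : b * t ≤ b * c := mul_le_mul_of_nonneg_left ht hb.le
    linarith
  · by_contra hne
    have h1 : a * s ≤ a * c := mul_le_mul_of_nonneg_left hs ha.le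
    have h2 : b * t < b * c := mul_lt_mul_of_pos_left (lt_of_le_of_ne ht hne) hb
    linarith

private lemma seg_ge {a b s t c : ℝ} (ha : 0 < a) (hb : 0 < b) (hab : a + b = 1)
    (h : a * s + b * t = c) (hs : c ≤ s) (ht : c ≤ t) : s = c ∧ t = c := by
  have := seg_le (s := -s) (t := -t) (c := -c) ha hb hab (by linarith) (by linarith) (by linarith)
  constructor <;> linarith [this.1, this.2]

set_option maxHeartbeats 1600000 in
theorem monotonized_dynamic_lp_vertices :
    let R : Set (Fin 8 → ℝ) :=
      {x | x 0 - (1 - x 4) ≤ x 3 ∧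
           (1 - x 2) - (1 - x 6) ≤ x 3 ∧
           x 0 + (1 - x 2) + (1 - x 4) ≥ x 3 ∧
           x 0 + (1 - x 2) + (1 - x 6) ≥ x 3 ∧
           x 1 - (1 - x 5) ≤ x 2 ∧
           x 3 - (1 - x 7) ≤ x 2 ∧
           x 1 + x 3 + (1 - x 5) ≥ x 2 ∧
           x 1 + x 3 + (1 - x 7) ≥ x 2 ∧
           ∀ i, 0 ≤ x i ∧ x i ≤ 1}
    (![1/2, 1, 1/2, 1/2, 1, 1/2, 1, 1] : Fin 8 → ℝ) ∈ R.extremePoints ℝ ∧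
    (![0, 0, 1, 0, 1, 0, 1, 0] : Fin 8 → ℝ) ∈ R.extremePoints ℝ := by
  intro R
  constructor
  · -- fractional vertex
    have e0 : (![1/2, 1, 1/2, 1/2, 1, 1/2, 1, 1] : Fin 8 → ℝ) 0 = 1/2 := rfl
    have e1 : (![1/2, 1, 1/2, 1/2, 1, 1/2, 1, 1] : Fin 8 → ℝ) 1 = 1 := rfl
    have e2 : (![1/2, 1, 1/2, 1/2, 1, 1/2, 1, 1] : Fin 8 → ℝ) 2 = 1/2 := rfl
    have e3 : (![1/2, 1, 1/2, 1/2, 1, 1/2, 1, 1] : Fin 8 → ℝ) 3 = 1/2 := rfl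
    have e4 : (![1/2, 1, 1/2, 1/2, 1, 1/2, 1, 1] : Fin 8 → ℝ) 4 = 1 := rfl
    have e5 : (![1/2, 1, 1/2, 1/2, 1, 1/2, 1, 1] : Fin 8 → ℝ) 5 = 1/2 := rfl
    have e6 : (![1/2, 1, 1/2, 1/2, 1, 1/2, 1, 1] : Fin 8 → ℝ) 6 = 1 := rfl
    have e7 : (![1/2, 1, 1/2, 1/2, 1, 1/2, 1, 1] : Fin 8 → ℝ) 7 = 1 := rfl
    refine ⟨⟨?_, ?_, ?_, ?_, ?_, ?_, ?_, ?_, fun i => ?_⟩, ?_⟩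
    · norm_num [e0, e3, e4]
    · norm_num [e2, e3, e6]
    · norm_num [e0, e2, e3, e4]
    · norm_num [e0, e2, e3, e6]
    · norm_num [e1, e2, e5]
    · norm_num [e2, e3, e7]
    · norm_num [e1, e2, e3, e5]
    · norm_num [e1, e2, e3, e7]
    · fin_cases i <;> norm_num
    rintro u hu v hv ⟨a, b, ha, hb, hab, habv⟩
    obtain ⟨hu1, hu2, hu3, hu4, hu5, hu6, hu7, hu8, hub⟩ := hu
    obtain ⟨hv1, hv2, hv3, hv4, hv5, hv6, hv7, hv8, hvb⟩ := hv
    have h : ∀ i, a * u i + b * v i = (![1/2, 1, 1/2, 1/2, 1, 1/2, 1, 1] : Fin 8 → ℝ) i :=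
      fun i => by simpa using congrFun habv i
    have h0 := h 0; have h1 := h 1; have h2 := h 2; have h3 := h 3
    have h4 := h 4; have h5 := h 5; have h6 := h 6; have h7 := h 7
    rw [e0] at h0; rw [e1] at h1; rw [e2] at h2; rw [e3] at h3
    rw [e4] at h4; rw [e5] at h5; rw [e6] at h6; rw [e7] at h7
    obtain ⟨hu1e, hv1e⟩ := seg_le ha hb hab h1 (hub 1).2 (hvb 1).2
    obtain ⟨hu4e, hv4e⟩ := seg_le ha hb hab h4 (hub 4).2 (hvb 4).2
    obtain ⟨hu6e, hv6e⟩ := seg_le ha hb hab h6 (hub 6).2 (hvb 6).2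
    obtain ⟨hu7e, hv7e⟩ := seg_le ha hb hab h7 (hub 7).2 (hvb 7).2
    obtain ⟨tu1, tv1⟩ := seg_le ha hb hab
      (show a * (u 0 + u 4 - u 3) + b * (v 0 + v 4 - v 3) = 1 by ring_nf; ring_nf at h0 h3 h4; linarith)
      (by linarith [hu1]) (by linarith [hv1])
    obtain ⟨tu2, tv2⟩ := seg_le ha hb hab
      (show a * (u 6 - u 2 - u 3) + b * (v 6 - v 2 - v 3) = 0 by ring_nf; ring_nf at h2 h3 h6; linarith)
      (by linarith [hu2]) (by linarith [hv2])
    obtain ⟨tu5, tv5⟩ := seg_le ha hb hab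
      (show a * (u 1 + u 5 - u 2) + b * (v 1 + v 5 - v 2) = 1 by ring_nf; ring_nf at h1 h2 h5; linarith)
      (by linarith [hu5]) (by linarith [hv5])
    obtain ⟨tu6, tv6⟩ := seg_le ha hb hab
      (show a * (u 3 + u 7 - u 2) + b * (v 3 + v 7 - v 2) = 1 by ring_nf; ring_nf at h2 h3 h7; linarith)
      (by linarith [hu6]) (by linarith [hv6])
    refine And.left (b := v = (![1/2, 1, 1/2, 1/2, 1, 1/2, 1, 1] : Fin 8 → ℝ)) ?_
    constructor
    · funext i
      fin_cases i
      · show u 0 = (1:ℝ)/2; linarith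
      · show u 1 = (1:ℝ); linarith
      · show u 2 = (1:ℝ)/2; linarith
      · show u 3 = (1:ℝ)/2; linarith
      · show u 4 = (1:ℝ); linarith
      · show u 5 = (1:ℝ)/2; linarith
      · show u 6 = (1:ℝ); linarith
      · show u 7 = (1:ℝ); linarith
    · funext i
      fin_cases i
      · show v 0 = (1:ℝ)/2; linarith
      · show v 1 = (1:ℝ); linarith
      · show v 2 = (1:ℝ)/2; linarith
      · show v 3 = (1:ℝ)/2; linarith
      · show v 4 = (1:ℝ); linarith
      · show v 5 = (1:ℝ)/2; linarith
      · show v 6 = (1:ℝ); linarith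
      · show v 7 = (1:ℝ); linarith
  · -- integral vertex
    have e0 : (![0, 0, 1, 0, 1, 0, 1, 0] : Fin 8 → ℝ) 0 = 0 := rfl
    have e1 : (![0, 0, 1, 0, 1, 0, 1, 0] : Fin 8 → ℝ) 1 = 0 := rfl
    have e2 : (![0, 0, 1, 0, 1, 0, 1, 0] : Fin 8 → ℝ) 2 = 1 := rfl
    have e3 : (![0, 0, 1, 0, 1, 0, 1, 0] : Fin 8 → ℝ) 3 = 0 := rfl
    have e4 : (![0, 0, 1, 0, 1, 0, 1, 0] : Fin 8 → ℝ) 4 = 1 := rfl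
    have e5 : (![0, 0, 1, 0, 1, 0, 1, 0] : Fin 8 → ℝ) 5 = 0 := rfl
    have e6 : (![0, 0, 1, 0, 1, 0, 1, 0] : Fin 8 → ℝ) 6 = 1 := rfl
    have e7 : (![0, 0, 1, 0, 1, 0, 1, 0] : Fin 8 → ℝ) 7 = 0 := rfl
    refine ⟨⟨?_, ?_, ?_, ?_, ?_, ?_, ?_, ?_, fun i => ?_⟩, ?_⟩
    · norm_num [e0, e3, e4]
    · norm_num [e2, e3, e6]
    · norm_num [e0, e2, e3, e4]
    · norm_num [e0, e2, e3, e6]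
    · norm_num [e1, e2, e5]
    · norm_num [e2, e3, e7]
    · norm_num [e1, e2, e3, e5]
    · norm_num [e1, e2, e3, e7]
    · fin_cases i <;> norm_num
    rintro u hu v hv ⟨a, b, ha, hb, hab, habv⟩
    obtain ⟨-, -, -, -, -, -, -, -, hub⟩ := hu
    obtain ⟨-, -, -, -, -, -, -, -, hvb⟩ := hv
    have h : ∀ i, a * u i + b * v i = (![0, 0, 1, 0, 1, 0, 1, 0] : Fin 8 → ℝ) i :=
      fun i => by simpa using congrFun habv i
    have h0 := h 0; have h1 := h 1; have h2 := h 2; have h3 := h 3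
    have h4 := h 4; have h5 := h 5; have h6 := h 6; have h7 := h 7
    rw [e0] at h0; rw [e1] at h1; rw [e2] at h2; rw [e3] at h3
    rw [e4] at h4; rw [e5] at h5; rw [e6] at h6; rw [e7] at h7
    obtain ⟨q0u, q0v⟩ := seg_ge ha hb hab h0 (hub 0).1 (hvb 0).1
    obtain ⟨q1u, q1v⟩ := seg_ge ha hb hab h1 (hub 1).1 (hvb 1).1
    obtain ⟨q2u, q2v⟩ := seg_le ha hb hab h2 (hub 2).2 (hvb 2).2
    obtain ⟨q3u, q3v⟩ := seg_ge ha hb hab h3 (hub 3).1 (hvb 3).1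
    obtain ⟨q4u, q4v⟩ := seg_le ha hb hab h4 (hub 4).2 (hvb 4).2
    obtain ⟨q5u, q5v⟩ := seg_ge ha hb hab h5 (hub 5).1 (hvb 5).1
    obtain ⟨q6u, q6v⟩ := seg_le ha hb hab h6 (hub 6).2 (hvb 6).2
    obtain ⟨q7u, q7v⟩ := seg_ge ha hb hab h7 (hub 7).1 (hvb 7).1
    refine And.left (b := v = (![0, 0, 1, 0, 1, 0, 1, 0] : Fin 8 → ℝ)) ?_
    constructor
    · funext i
      fin_cases i
      · exact q0u
      · exact q1u
      · exact q2u
      · exact q3u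
      · exact q4u
      · exact q5u
      · exact q6u
      · exact q7u
    · funext i
      fin_cases i
      · exact q0v
      · exact q1v
      · exact q2v
      · exact q3v
      · exact q4v
      · exact q5v
      · exact q6v
      · exact q7v
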